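/- arXiv:1811.02503 — 2 statements merged into one kernel-verified Lean document; each statement's English description precedes it below -/
import Mathlib

section
/- Let V be a finite index set, let (μ⁽¹⁾, Σ⁽¹⁾) and (μ⁽²⁾, Σ⁽²⁾) be two pairs of mean vectors and symmetric positive definite covariance matrices indexed by V, and let D ⊆ V be a nonempty proper subset that is a seed set for the two pairs. Then for every x ∈ ℝ^V, f(x; μ⁽¹⁾, Σ⁽¹⁾) / f(x; μ⁽²⁾, Σ⁽²⁾) = f(x_D; μ⁽¹⁾_D, Σ⁽¹⁾_D) / f(x_D; μ⁽²⁾_D, Σ⁽²⁾_D). That is, the likelihood ratio of the two joint Gaussian densities depends on x only through x_D and equals the likelihood ratio of the marginal densities on D. -/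
open Matrix

/-- Sub-matrix of `M` with rows indexed by `A` and columns indexed by `B`. -/
def msub {V : Type*} [Fintype V] [DecidableEq V] (M : Matrix V V ℝ) (A B : Finset V) :
    Matrix A B ℝ :=
  M.submatrix (fun a => a.1) (fun b => b.1)

/-- Principal sub-matrix of `M` indexed by the finset `A`. -/
def psub {V : Type*} [Fintype V] [DecidableEq V] (M : Matrix V V ℝ) (A : Finset V) :
    Matrix A A ℝ :=
  msub M A A

/-- Sub-vector of `x` indexed by the finset `A`. -/
def rest {V : Type*} (x : V → ℝ) (A : Finset V) : A → ℝ := fun a => x a.1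

/-- The conditional parameters of `X_B` given `X_S` for a Gaussian vector with
parameters `(μ, Σ)`: the triple
`(μ_B − Σ_{B,S} Σ_S⁻¹ μ_S, Σ_{B,S} Σ_S⁻¹, Σ_B − Σ_{B,S} Σ_S⁻¹ Σ_{S,B})`. -/
noncomputable def condParams {V : Type*} [Fintype V] [DecidableEq V]
    (μ : V → ℝ) (Sg : Matrix V V ℝ) (B S : Finset V) :
    (B → ℝ) × Matrix B S ℝ × Matrix B B ℝ :=
  (rest μ B - (msub Sg B S * (psub Sg S)⁻¹) *ᵥ rest μ S,
   msub Sg B S * (psub Sg S)⁻¹,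
   psub Sg B - msub Sg B S * (psub Sg S)⁻¹ * msub Sg S B)

/-- `D` is a seed set for the pairs `(μ⁽¹⁾, Σ⁽¹⁾)`, `(μ⁽²⁾, Σ⁽²⁾)` if the conditional
parameters of `X_{V∖D}` given `X_D` coincide for the two pairs.  (For `D = V` the
condition is vacuous, and for `D = ∅` it amounts to equality of the two pairs.) -/
def IsSeedSet {V : Type*} [Fintype V] [DecidableEq V]
    (μ₁ : V → ℝ) (S₁ : Matrix V V ℝ) (μ₂ : V → ℝ) (S₂ : Matrix V V ℝ)
    (D : Finset V) : Prop :=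
  condParams μ₁ S₁ Dᶜ D = condParams μ₂ S₂ Dᶜ D

/-- The Gaussian density. -/
noncomputable def gauss {I : Type*} [Fintype I] [DecidableEq I]
    (μ : I → ℝ) (S : Matrix I I ℝ) (x : I → ℝ) : ℝ :=
  (2 * Real.pi) ^ (-(Fintype.card I : ℝ) / 2) * S.det ^ (-(1 : ℝ) / 2) *
    Real.exp (-(1 / 2 : ℝ) * ((x - μ) ⬝ᵥ (S⁻¹ *ᵥ (x - μ))))

set_option linter.unusedSectionVars false
set_option linter.unusedVariables false
set_option maxHeartbeats 1000000

section helpers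

variable {m n : Type*} [Fintype m] [DecidableEq m] [Fintype n] [DecidableEq n]

lemma dot_comp (e : m ≃ n) (u v : n → ℝ) : (u ∘ e) ⬝ᵥ (v ∘ e) = u ⬝ᵥ v :=
  e.sum_comp fun j => u j * v j

lemma quad_comp (e : m ≃ n) (M : Matrix n n ℝ) (u : n → ℝ) :
    (u ∘ e) ⬝ᵥ (M.submatrix e e *ᵥ (u ∘ e)) = u ⬝ᵥ (M *ᵥ u) := by
  rw [submatrix_mulVec_equiv]
  have : (u ∘ e) ∘ e.symm = u := by ext i; simp
  rw [this, dot_comp]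

lemma posdef_submatrix_equiv (e : m ≃ n) {M : Matrix n n ℝ} (hM : M.PosDef) :
    (M.submatrix e e).PosDef := by
  refine posDef_iff_dotProduct_mulVec.mpr ⟨?_, fun x hx => ?_⟩
  · show _ᴴ = _
    rw [conjTranspose_submatrix, hM.1]
  · have hx' : x ∘ e.symm ≠ 0 := by
      intro h; apply hx; ext i
      simpa using congrFun h (e i)
    have h2 := (posDef_iff_dotProduct_mulVec.mp hM).2 (x := x ∘ e.symm) hx'
    have hxe : (x ∘ e.symm) ∘ e = x := by ext i; simp
    simp only [star_trivial] at h2 ⊢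
    rw [← hxe, quad_comp]
    exact h2

lemma posdef_fromBlocks_left {A : Matrix m m ℝ} {B : Matrix m n ℝ} {C : Matrix n m ℝ}
    {D : Matrix n n ℝ} (h : (fromBlocks A B C D).PosDef) : A.PosDef := by
  refine posDef_iff_dotProduct_mulVec.mpr ⟨?_, fun x hx => ?_⟩
  · have := h.1
    rw [isHermitian_fromBlocks_iff] at this
    exact this.1
  · have hx' : (Sum.elim x 0 : m ⊕ n → ℝ) ≠ 0 := by
      intro hc; apply hx; ext i; exact congrFun hc (Sum.inl i)
    have := (posDef_iff_dotProduct_mulVec.mp h).2 (x := Sum.elim x 0) hx'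
    simpa [fromBlocks_mulVec, sumElim_dotProduct_sumElim] using this


variable {m n : Type*} [Fintype m] [DecidableEq m] [Fintype n] [DecidableEq n]

lemma dot_mulVec_shift (X : Matrix m n ℝ) (a : m → ℝ) (b : n → ℝ) :
    a ⬝ᵥ (X *ᵥ b) = (Xᵀ *ᵥ a) ⬝ᵥ b := by
  rw [dotProduct_mulVec, ← vecMul_transpose, transpose_transpose]

lemma quad_conj {p q : Type*} [Fintype p] [Fintype q] [DecidableEq p] [DecidableEq q] (X : Matrix p m ℝ) (N : Matrix p q ℝ) (a : m → ℝ) (b : q → ℝ) :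
    a ⬝ᵥ ((Xᵀ * N) *ᵥ b) = (X *ᵥ a) ⬝ᵥ (N *ᵥ b) := by
  rw [← mulVec_mulVec, dot_mulVec_shift, transpose_transpose]

lemma key_quad (A : Matrix m m ℝ) (B : Matrix m n ℝ) (D' : Matrix n n ℝ)
    (hAs : Aᵀ = A) (hDs : D'ᵀ = D')
    (hA : A.PosDef) (hS : IsUnit (D' - Bᵀ * A⁻¹ * B).det) (u : m → ℝ) (v : n → ℝ) :
    Sum.elim u v ⬝ᵥ ((fromBlocks A B Bᵀ D')⁻¹ *ᵥ Sum.elim u v) =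
      u ⬝ᵥ (A⁻¹ *ᵥ u) +
        (v - (Bᵀ * A⁻¹) *ᵥ u) ⬝ᵥ ((D' - Bᵀ * A⁻¹ * B)⁻¹ *ᵥ (v - (Bᵀ * A⁻¹) *ᵥ u)) := by
  letI iA : Invertible A := invertibleOfIsUnitDet A hA.det_pos.ne'.isUnit
  letI iS : Invertible (D' - Bᵀ * A⁻¹ * B) := invertibleOfIsUnitDet _ hS
  letI iS' : Invertible (D' - Bᵀ * ⅟A * B) := by rwa [invOf_eq_nonsing_inv]
  letI iM : Invertible (fromBlocks A B Bᵀ D') := fromBlocks₁₁Invertible A B Bᵀ D'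
  set S := D' - Bᵀ * A⁻¹ * B with hSdef
  have e1 : (⅟A : Matrix m m ℝ) = A⁻¹ := invOf_eq_nonsing_inv A
  have e2 : D' - Bᵀ * ⅟A * B = S := by rw [e1]
  have e3 : ⅟(D' - Bᵀ * ⅟A * B) = S⁻¹ := by rw [invOf_eq_nonsing_inv, e2]
  have hAinv : (A⁻¹)ᵀ = A⁻¹ := by rw [transpose_nonsing_inv, hAs]
  have hX : (Bᵀ * A⁻¹)ᵀ = A⁻¹ * B := by rw [transpose_mul, transpose_transpose, hAinv]
  have hSs : Sᵀ = S := by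
    rw [hSdef, transpose_sub, hDs, transpose_mul, transpose_mul, transpose_transpose, hAinv,
      Matrix.mul_assoc]
  have hSinv : (S⁻¹)ᵀ = S⁻¹ := by rw [transpose_nonsing_inv, hSs]
  have hinv : (fromBlocks A B Bᵀ D')⁻¹ =
      fromBlocks (A⁻¹ + A⁻¹ * B * S⁻¹ * Bᵀ * A⁻¹) (-(A⁻¹ * B * S⁻¹))
        (-(S⁻¹ * Bᵀ * A⁻¹)) S⁻¹ := by
    rw [← invOf_eq_nonsing_inv, invOf_fromBlocks₁₁_eq, e3, e1]
  set w := (Bᵀ * A⁻¹) *ᵥ u with hw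
  have hdsym : ∀ a b : n → ℝ, a ⬝ᵥ (S⁻¹ *ᵥ b) = b ⬝ᵥ (S⁻¹ *ᵥ a) := by
    intro a b
    rw [dot_mulVec_shift, hSinv, dotProduct_comm]
  have t2 : u ⬝ᵥ ((A⁻¹ * B * S⁻¹ * Bᵀ * A⁻¹) *ᵥ u) = w ⬝ᵥ (S⁻¹ *ᵥ w) := by
    have : A⁻¹ * B * S⁻¹ * Bᵀ * A⁻¹ = (Bᵀ * A⁻¹)ᵀ * (S⁻¹ * (Bᵀ * A⁻¹)) := by
      rw [hX]; simp only [Matrix.mul_assoc]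
    rw [this, quad_conj, ← hw, ← mulVec_mulVec, ← hw]
  have t3 : u ⬝ᵥ ((A⁻¹ * B * S⁻¹) *ᵥ v) = w ⬝ᵥ (S⁻¹ *ᵥ v) := by
    have : A⁻¹ * B * S⁻¹ = (Bᵀ * A⁻¹)ᵀ * S⁻¹ := by rw [hX]
    rw [this, quad_conj, ← hw]
  have t4 : v ⬝ᵥ ((S⁻¹ * Bᵀ * A⁻¹) *ᵥ u) = v ⬝ᵥ (S⁻¹ *ᵥ w) := by
    rw [Matrix.mul_assoc, ← mulVec_mulVec, ← hw]
  rw [hinv, fromBlocks_mulVec, sumElim_dotProduct_sumElim]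
  simp only [Sum.elim_comp_inl, Sum.elim_comp_inr, add_mulVec, neg_mulVec, dotProduct_add,
    dotProduct_neg, mulVec_sub, dotProduct_sub, sub_dotProduct]
  rw [t2, t3, t4, hdsym w v]
  ring


end helpers

section main
variable {V : Type*} [Fintype V] [DecidableEq V]

def blockEquiv (D : Finset V) : (↥D ⊕ ↥(Dᶜ : Finset V)) ≃ V where
  toFun := Sum.elim Subtype.val Subtype.val
  invFun v := if h : v ∈ D then Sum.inl ⟨v, h⟩ else Sum.inr ⟨v, Finset.mem_compl.2 h⟩
  left_inv := by
    rintro (⟨v, hv⟩ | ⟨v, hv⟩)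
    · simp [hv]
    · simp [Finset.mem_compl.1 hv]
  right_inv v := by by_cases h : v ∈ D <;> simp [h]

lemma submatrix_blockEquiv (M : Matrix V V ℝ) (D : Finset V) :
    M.submatrix (blockEquiv D) (blockEquiv D) =
      fromBlocks (psub M D) (msub M D Dᶜ) (msub M Dᶜ D) (psub M Dᶜ) := by
  ext i j
  cases i <;> cases j <;> rfl

lemma comp_blockEquiv (x : V → ℝ) (D : Finset V) :
    x ∘ (blockEquiv D) = Sum.elim (rest x D) (rest x Dᶜ) := by
  ext (i | i) <;> rfl

lemma msub_compl_eq_transpose {M : Matrix V V ℝ} (h : M.IsSymm) (D : Finset V) :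
    msub M Dᶜ D = (msub M D Dᶜ)ᵀ := by
  ext i j
  exact h.apply j.1 i.1

lemma psub_transpose {M : Matrix V V ℝ} (h : M.IsSymm) (A : Finset V) :
    (psub M A)ᵀ = psub M A := by
  ext i j
  exact h.apply i.1 j.1

lemma psub_posDef {M : Matrix V V ℝ} (hpd : M.PosDef) (D : Finset V) :
    (psub M D).PosDef := by
  have h := posdef_submatrix_equiv (blockEquiv D) hpd
  rw [submatrix_blockEquiv] at h
  exact posdef_fromBlocks_left h

end main
section main2
variable {V : Type*} [Fintype V] [DecidableEq V]

lemma rest_sub (x μ : V → ℝ) (A : Finset V) : rest (x - μ) A = rest x A - rest μ A := rfl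

lemma schur_det_eq {M : Matrix V V ℝ} (hpd : M.PosDef) (D : Finset V) :
    M.det = (psub M D).det *
      (psub M Dᶜ - msub M Dᶜ D * (psub M D)⁻¹ * msub M D Dᶜ).det := by
  have hApd := psub_posDef hpd D
  letI iA : Invertible (psub M D) := invertibleOfIsUnitDet _ hApd.det_pos.ne'.isUnit
  rw [← det_submatrix_equiv_self (blockEquiv D) M, submatrix_blockEquiv, det_fromBlocks₁₁,
    invOf_eq_nonsing_inv]

lemma schur_det_pos {M : Matrix V V ℝ} (hpd : M.PosDef) (D : Finset V) :
    0 < (psub M Dᶜ - msub M Dᶜ D * (psub M D)⁻¹ * msub M D Dᶜ).det := by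
  have h1 := hpd.det_pos
  rw [schur_det_eq hpd D] at h1
  nlinarith [(psub_posDef hpd D).det_pos]

lemma condParams_det_pos (μ : V → ℝ) {M : Matrix V V ℝ} (hpd : M.PosDef) (D : Finset V) :
    0 < (condParams μ M Dᶜ D).2.2.det :=
  schur_det_pos hpd D

noncomputable def condFactor (D : Finset V)
    (p : (↥(Dᶜ : Finset V) → ℝ) × Matrix ↥(Dᶜ : Finset V) ↥D ℝ ×
      Matrix ↥(Dᶜ : Finset V) ↥(Dᶜ : Finset V) ℝ) (x : V → ℝ) : ℝ :=
  (2 * Real.pi) ^ (-(Fintype.card ↥(Dᶜ : Finset V) : ℝ) / 2) * p.2.2.det ^ (-(1 : ℝ) / 2) *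
    Real.exp (-(1 / 2 : ℝ) * ((rest x Dᶜ - (p.1 + p.2.1 *ᵥ rest x D)) ⬝ᵥ
      (p.2.2⁻¹ *ᵥ (rest x Dᶜ - (p.1 + p.2.1 *ᵥ rest x D)))))

lemma condFactor_pos (D : Finset V) (μ : V → ℝ) {M : Matrix V V ℝ} (hpd : M.PosDef)
    (x : V → ℝ) : 0 < condFactor D (condParams μ M Dᶜ D) x := by
  have h := condParams_det_pos μ hpd D
  unfold condFactor
  positivity

lemma gauss_factor (μ : V → ℝ) (M : Matrix V V ℝ) (hsym : M.IsSymm) (hpd : M.PosDef)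
    (D : Finset V) (x : V → ℝ) :
    gauss μ M x =
      gauss (rest μ D) (psub M D) (rest x D) * condFactor D (condParams μ M Dᶜ D) x := by
  have hApd := psub_posDef hpd D
  have hAs := psub_transpose hsym D
  have hDs := psub_transpose hsym Dᶜ
  have hC := msub_compl_eq_transpose hsym D
  have hSdet0 := schur_det_pos hpd D
  have hSdet : 0 < (psub M Dᶜ - (msub M D Dᶜ)ᵀ * (psub M D)⁻¹ * msub M D Dᶜ).det := by
    rwa [hC] at hSdet0
  have hc22 : (condParams μ M Dᶜ D).2.2 =
      psub M Dᶜ - (msub M D Dᶜ)ᵀ * (psub M D)⁻¹ * msub M D Dᶜ := by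
    show psub M Dᶜ - msub M Dᶜ D * (psub M D)⁻¹ * msub M D Dᶜ = _
    rw [hC]
  have hquad : (x - μ) ⬝ᵥ (M⁻¹ *ᵥ (x - μ)) =
      rest (x - μ) D ⬝ᵥ ((psub M D)⁻¹ *ᵥ rest (x - μ) D) +
        (rest (x - μ) Dᶜ - ((msub M D Dᶜ)ᵀ * (psub M D)⁻¹) *ᵥ rest (x - μ) D) ⬝ᵥ
          ((psub M Dᶜ - (msub M D Dᶜ)ᵀ * (psub M D)⁻¹ * msub M D Dᶜ)⁻¹ *ᵥ
            (rest (x - μ) Dᶜ - ((msub M D Dᶜ)ᵀ * (psub M D)⁻¹) *ᵥ rest (x - μ) D)) := by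
    rw [← quad_comp (blockEquiv D) M⁻¹ (x - μ), ← Matrix.inv_submatrix_equiv,
      submatrix_blockEquiv, comp_blockEquiv, hC]
    exact key_quad _ _ _ hAs hDs hApd hSdet.ne'.isUnit _ _
  have hz : rest x Dᶜ - ((condParams μ M Dᶜ D).1 + (condParams μ M Dᶜ D).2.1 *ᵥ rest x D) =
      rest (x - μ) Dᶜ - ((msub M D Dᶜ)ᵀ * (psub M D)⁻¹) *ᵥ rest (x - μ) D := by
    show rest x Dᶜ - ((rest μ Dᶜ - (msub M Dᶜ D * (psub M D)⁻¹) *ᵥ rest μ D) +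
      (msub M Dᶜ D * (psub M D)⁻¹) *ᵥ rest x D) = _
    rw [hC, rest_sub, rest_sub, Matrix.mulVec_sub]
    abel
  have hcard : -(Fintype.card V : ℝ) / 2 =
      -(Fintype.card ↥D : ℝ) / 2 + -(Fintype.card ↥(Dᶜ : Finset V) : ℝ) / 2 := by
    have h : (Fintype.card ↥D : ℝ) + (Fintype.card ↥(Dᶜ : Finset V) : ℝ) =
        (Fintype.card V : ℝ) := by
      rw [Fintype.card_coe, Fintype.card_coe]
      exact_mod_cast D.card_add_card_compl
    linarith
  have hdet : M.det ^ (-(1 : ℝ) / 2) =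
      (psub M D).det ^ (-(1 : ℝ) / 2) * (condParams μ M Dᶜ D).2.2.det ^ (-(1 : ℝ) / 2) := by
    rw [hc22, ← Real.mul_rpow hApd.det_pos.le hSdet.le, ← hC, ← schur_det_eq hpd D]
  unfold gauss condFactor
  rw [hquad, hz, hcard, Real.rpow_add (by positivity), hdet, hc22, ← rest_sub]
  rw [show -(1 / 2 : ℝ) * (rest (x - μ) D ⬝ᵥ ((psub M D)⁻¹ *ᵥ rest (x - μ) D) +
        (rest (x - μ) Dᶜ - ((msub M D Dᶜ)ᵀ * (psub M D)⁻¹) *ᵥ rest (x - μ) D) ⬝ᵥ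
          ((psub M Dᶜ - (msub M D Dᶜ)ᵀ * (psub M D)⁻¹ * msub M D Dᶜ)⁻¹ *ᵥ
            (rest (x - μ) Dᶜ - ((msub M D Dᶜ)ᵀ * (psub M D)⁻¹) *ᵥ rest (x - μ) D))) =
      -(1 / 2 : ℝ) * (rest (x - μ) D ⬝ᵥ ((psub M D)⁻¹ *ᵥ rest (x - μ) D)) +
      -(1 / 2 : ℝ) * ((rest (x - μ) Dᶜ - ((msub M D Dᶜ)ᵀ * (psub M D)⁻¹) *ᵥ rest (x - μ) D) ⬝ᵥ
          ((psub M Dᶜ - (msub M D Dᶜ)ᵀ * (psub M D)⁻¹ * msub M D Dᶜ)⁻¹ *ᵥ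
            (rest (x - μ) Dᶜ - ((msub M D Dᶜ)ᵀ * (psub M D)⁻¹) *ᵥ rest (x - μ) D))) from by ring,
    Real.exp_add]
  ring

end main2

/-- If `D` is a nonempty proper seed set, the likelihood ratio of the two joint Gaussian
densities depends on `x` only through `x_D` and equals the likelihood ratio of the
marginal Gaussian densities on `D`. -/
theorem stmt_8 {V : Type*} [Fintype V] [DecidableEq V]
    (μ₁ μ₂ : V → ℝ) (S₁ S₂ : Matrix V V ℝ)
    (h₁sym : S₁.IsSymm) (h₂sym : S₂.IsSymm)
    (h₁ : S₁.PosDef) (h₂ : S₂.PosDef)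
    (D : Finset V) (hne : D.Nonempty) (hproper : D ≠ Finset.univ)
    (hseed : IsSeedSet μ₁ S₁ μ₂ S₂ D) :
    ∀ x : V → ℝ,
      gauss μ₁ S₁ x / gauss μ₂ S₂ x =
        gauss (rest μ₁ D) (psub S₁ D) (rest x D) /
          gauss (rest μ₂ D) (psub S₂ D) (rest x D) := by
  intro x
  have f1 := gauss_factor μ₁ S₁ h₁sym h₁ D x
  have f2 := gauss_factor μ₂ S₂ h₂sym h₂ D x
  rw [IsSeedSet] at hseed
  rw [← hseed] at f2
  have hc : condFactor D (condParams μ₁ S₁ Dᶜ D) x ≠ 0 := (condFactor_pos D μ₁ h₁ x).ne'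
  rw [f1, f2, mul_div_mul_right _ _ hc]
end

section
/- (Global Markov property for Gaussian graphical models, covariance form.) Let G be a simple graph on a finite vertex set V, let K ∈ S⁺(G) and let Σ := K⁻¹. Let A, B, S ⊆ V be pairwise disjoint subsets with A, B nonempty such that S separates A from B in G. Then Σ_{A,B} = Σ_{A,S} Σ_S⁻¹ Σ_{S,B}, with the convention that the right-hand side is the zero matrix when S = ∅. Equivalently, the conditional cross-covariance of the A-coordinates and B-coordinates given the S-coordinates vanishes. -/
open Matrix

lemma posDef_submatrix_of_injective {n m : Type*} [Fintype n] [Fintype m]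
    {M : Matrix n n ℝ} (hM : M.PosDef) {e : m → n} (he : Function.Injective e) :
    (M.submatrix e e).PosDef := by
  classical
  refine Matrix.PosDef.of_dotProduct_mulVec_pos (hM.1.submatrix e) fun x hx => ?_
  set y : n → ℝ := Function.extend e x 0 with hy
  have hye : ∀ i, y (e i) = x i := fun i => he.extend_apply x 0 i
  have hy0 : ∀ v, v ∉ Set.range e → y v = 0 := by
    intro v hv
    simp [hy, Function.extend_apply' _ _ _ (by simpa [Set.range] using hv)]
  have hyne : y ≠ 0 := by
    obtain ⟨i, hi⟩ := Function.ne_iff.mp hx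
    exact fun h => hi (by rw [← hye i, h]; rfl)
  have hsum : ∀ g : n → ℝ, (∑ w, y w * g w) = ∑ j, x j * g (e j) := by
    intro g
    have h2 : ∑ w, y w * g w = ∑ w ∈ Finset.univ.image e, y w * g w := by
      refine (Finset.sum_subset (Finset.subset_univ _) (fun v _ hv => ?_)).symm
      rw [hy0 v (by simpa [Set.range, eq_comm] using hv), zero_mul]
    rw [h2, Finset.sum_image (fun a _ b _ h => he h)]
    simp [hye]
  have key : star x ⬝ᵥ ((M.submatrix e e) *ᵥ x) = star y ⬝ᵥ (M *ᵥ y) := by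
    simp only [star_trivial, dotProduct, mulVec, submatrix_apply]
    rw [hsum (fun v => ∑ w, M v w * y w)]
    refine Finset.sum_congr rfl fun i _ => ?_
    congr 1
    refine Eq.symm ?_
    calc (∑ w, M (e i) w * y w) = ∑ w, y w * M (e i) w := by
          exact Finset.sum_congr rfl fun w _ => mul_comm _ _
      _ = ∑ j, x j * M (e i) (e j) := hsum _
      _ = ∑ j, M (e i) (e j) * x j := Finset.sum_congr rfl fun j _ => mul_comm _ _
  rw [key]
  exact hM.dotProduct_mulVec_pos hyne

lemma key_block {ι κ σ : Type*} [Fintype ι] [Fintype κ] [Fintype σ]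
    [DecidableEq ι] [DecidableEq κ] [DecidableEq σ]
    (M : Matrix ((ι ⊕ κ) ⊕ σ) ((ι ⊕ κ) ⊕ σ) ℝ) (hM : M.PosDef)
    (h12 : ∀ i j, M (Sum.inl (Sum.inl i)) (Sum.inl (Sum.inr j)) = 0)
    (h21 : ∀ i j, M (Sum.inl (Sum.inr j)) (Sum.inl (Sum.inl i)) = 0)
    (i : ι) (j : κ) :
    M⁻¹ (Sum.inl (Sum.inl i)) (Sum.inl (Sum.inr j)) =
      ∑ t : σ, (∑ s : σ, M⁻¹ (Sum.inl (Sum.inl i)) (Sum.inr s) * (M⁻¹.toBlocks₂₂)⁻¹ s t) *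
        M⁻¹ (Sum.inr t) (Sum.inl (Sum.inr j)) := by
  classical
  have hMinv : M⁻¹.PosDef := hM.inv
  set a := M.toBlocks₁₁ with ha
  set b := M.toBlocks₁₂ with hb
  set c := M.toBlocks₂₁ with hc
  set d := M.toBlocks₂₂ with hd
  set P := M⁻¹.toBlocks₁₁ with hP
  set Q := M⁻¹.toBlocks₁₂ with hQ
  set R := M⁻¹.toBlocks₂₁ with hR
  set T := M⁻¹.toBlocks₂₂ with hT
  have hTpd : T.PosDef := by
    have : T = M⁻¹.submatrix Sum.inr Sum.inr := rfl
    rw [this]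
    exact posDef_submatrix_of_injective hMinv Sum.inr_injective
  have hTinv : T * T⁻¹ = 1 := T.mul_nonsing_inv (isUnit_iff_ne_zero.mpr hTpd.det_pos.ne')
  have hMul : M * M⁻¹ = 1 := M.mul_nonsing_inv (isUnit_iff_ne_zero.mpr hM.det_pos.ne')
  have hblocks : fromBlocks (a * P + b * R) (a * Q + b * T) (c * P + d * R) (c * Q + d * T)
      = fromBlocks 1 0 0 1 := by
    rw [← fromBlocks_multiply, fromBlocks_toBlocks, fromBlocks_toBlocks, hMul, fromBlocks_one]
  have e11 : a * P + b * R = 1 := (fromBlocks_inj.mp hblocks).1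
  have e12 : a * Q + b * T = 0 := (fromBlocks_inj.mp hblocks).2.1
  have hbval : b = -(a * Q) * T⁻¹ := by
    have h1 : b * T = -(a * Q) := by
      have := e12
      linear_combination (norm := abel) this
    calc b = b * (T * T⁻¹) := by rw [hTinv, Matrix.mul_one]
      _ = (b * T) * T⁻¹ := by rw [Matrix.mul_assoc]
      _ = -(a * Q) * T⁻¹ := by rw [h1]
  have hkey : a * (P - Q * T⁻¹ * R) = 1 := by
    have : a * (P - Q * T⁻¹ * R) = a * P + b * R := by
      rw [hbval]
      rw [Matrix.mul_sub]
      simp only [Matrix.neg_mul, Matrix.mul_neg, Matrix.mul_assoc]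
      abel
    rw [this, e11]
  have hainv : a⁻¹ = P - Q * T⁻¹ * R := inv_eq_right_inv hkey
  set a1 := a.toBlocks₁₁ with ha1
  set a2 := a.toBlocks₂₂ with ha2
  have ha1pd : a1.PosDef := by
    have : a1 = M.submatrix (Sum.inl ∘ Sum.inl) (Sum.inl ∘ Sum.inl) := rfl
    rw [this]
    exact posDef_submatrix_of_injective hM (Sum.inl_injective.comp Sum.inl_injective)
  have ha2pd : a2.PosDef := by
    have : a2 = M.submatrix (Sum.inl ∘ Sum.inr) (Sum.inl ∘ Sum.inr) := rfl
    rw [this]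
    exact posDef_submatrix_of_injective hM (Sum.inl_injective.comp Sum.inr_injective)
  have haeq : a = fromBlocks a1 0 0 a2 := by
    rw [← fromBlocks_toBlocks a]
    refine fromBlocks_inj.mpr ⟨rfl, ?_, ?_, rfl⟩
    · ext i j; exact h12 i j
    · ext i j; exact h21 j i
  have hablock : a * fromBlocks a1⁻¹ 0 0 a2⁻¹ = 1 := by
    rw [haeq, fromBlocks_multiply]
    rw [a1.mul_nonsing_inv (isUnit_iff_ne_zero.mpr ha1pd.det_pos.ne'),
      a2.mul_nonsing_inv (isUnit_iff_ne_zero.mpr ha2pd.det_pos.ne')]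
    simp [fromBlocks_one]
  have hainv2 : a⁻¹ = fromBlocks a1⁻¹ 0 0 a2⁻¹ := inv_eq_right_inv hablock
  have hzero : (P - Q * T⁻¹ * R) (Sum.inl i) (Sum.inr j) = 0 := by
    rw [← hainv, hainv2]
    simp [fromBlocks]
  have hPeq : P (Sum.inl i) (Sum.inr j) = (Q * T⁻¹ * R) (Sum.inl i) (Sum.inr j) := by
    have := hzero
    simp only [Matrix.sub_apply] at this
    linarith
  have hexp : (Q * T⁻¹ * R) (Sum.inl i) (Sum.inr j) =
      ∑ t : σ, (∑ s : σ, Q (Sum.inl i) s * T⁻¹ s t) * R t (Sum.inr j) := by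
    simp [Matrix.mul_apply]
  have hPval : P (Sum.inl i) (Sum.inr j) = M⁻¹ (Sum.inl (Sum.inl i)) (Sum.inl (Sum.inr j)) := rfl
  rw [← hPval, hPeq, hexp]
  rfl

/-- `K ∈ S⁺(G)`: `K` is symmetric positive definite with `K v w = 0` for all distinct
vertices `v, w` that are not adjacent in `G`. -/
def SPlus {V : Type*} [Fintype V] (G : SimpleGraph V) (K : Matrix V V ℝ) : Prop :=
  K.IsSymm ∧ K.PosDef ∧ ∀ v w : V, v ≠ w → ¬ G.Adj v w → K v w = 0

/-- `S` separates `A` from `B` in `G`: every walk from a vertex of `A∖S` to a vertex of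
`B∖S` passes through a vertex of `S`. -/
def Separates {V : Type*} (G : SimpleGraph V) (A B S : Finset V) : Prop :=
  ∀ a b : V, a ∈ A → a ∉ S → b ∈ B → b ∉ S →
    ∀ w : G.Walk a b, ∃ s ∈ S, s ∈ w.support

/-- Global Markov property for Gaussian graphical models, covariance form: if `K ∈ S⁺(G)`,
`Σ = K⁻¹`, and `S` separates the disjoint nonempty sets `A`, `B` in `G`, then
`Σ_{A,B} = Σ_{A,S} Σ_S⁻¹ Σ_{S,B}` (the right-hand side being the zero matrix when
`S = ∅`, which is automatic since then the sum is over the empty index type). -/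
theorem stmt_12 {V : Type*} [Fintype V] [DecidableEq V]
    (G : SimpleGraph V) (K : Matrix V V ℝ) (hK : SPlus G K)
    (Sg : Matrix V V ℝ) (hSg : Sg = K⁻¹)
    (A B S : Finset V) (hA : A.Nonempty) (hB : B.Nonempty)
    (hAB : Disjoint A B) (hAS : Disjoint A S) (hBS : Disjoint B S)
    (hsep : Separates G A B S) :
    msub Sg A B = msub Sg A S * (psub Sg S)⁻¹ * msub Sg S B := by
  classical
  obtain ⟨hKs, hKpd, hK0⟩ := hK
  set reach : V → Prop :=
    fun v => v ∉ S ∧ ∃ a ∈ A, ∃ w : G.Walk a v, ∀ x ∈ w.support, x ∉ S with hreach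
  set I : Finset V := Finset.univ.filter reach with hI
  set J : Finset V := Finset.univ.filter (fun v => v ∉ S ∧ ¬ reach v) with hJ
  have hAI : ∀ a ∈ A, a ∈ I := by
    intro a ha
    have haS : a ∉ S := fun h => (Finset.disjoint_left.mp hAS ha) h
    rw [hI, Finset.mem_filter]
    exact ⟨Finset.mem_univ a, haS, a, ha, SimpleGraph.Walk.nil, by
      intro x hx
      simp only [SimpleGraph.Walk.support_nil, List.mem_singleton] at hx
      rw [hx]; exact haS⟩
  have hBJ : ∀ b ∈ B, b ∈ J := by
    intro b hb
    have hbS : b ∉ S := fun h => (Finset.disjoint_left.mp hBS hb) h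
    rw [hJ, Finset.mem_filter]
    refine ⟨Finset.mem_univ b, hbS, fun hr => ?_⟩
    obtain ⟨_, a, ha, w, hw⟩ := hr
    have haS : a ∉ S := hw a w.start_mem_support
    obtain ⟨s, hsS, hs⟩ := hsep a b ha haS hb hbS w
    exact hw s hs hsS
  have hIS : ∀ v ∈ I, v ∉ S := fun v hv => (Finset.mem_filter.mp hv).2.1
  have hJS : ∀ v ∈ J, v ∉ S := fun v hv => (Finset.mem_filter.mp hv).2.1
  have hIJ : ∀ v : V, ¬(v ∈ I ∧ v ∈ J) := by
    rintro v ⟨h1, h2⟩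
    exact (Finset.mem_filter.mp h2).2.2 (Finset.mem_filter.mp h1).2
  have hK0' : ∀ v ∈ I, ∀ w ∈ J, K v w = 0 ∧ K w v = 0 := by
    intro v hv w hw
    have hr : reach v := (Finset.mem_filter.mp hv).2
    have hnr : ¬ reach w := (Finset.mem_filter.mp hw).2.2
    have hwS : w ∉ S := hJS w hw
    have hne : v ≠ w := fun h => hnr (h ▸ hr)
    have hnadj : ¬ G.Adj v w := by
      intro hadj
      obtain ⟨hvS, a, ha, p, hp⟩ := hr
      refine hnr ⟨hwS, a, ha, p.concat hadj, ?_⟩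
      intro x hx
      rw [SimpleGraph.Walk.support_concat, List.mem_append] at hx
      rcases hx with h | h
      · exact hp x h
      · simp only [List.mem_singleton] at h
        rw [h]; exact hwS
    exact ⟨hK0 v w hne hnadj, hK0 w v hne.symm (fun h => hnadj h.symm)⟩
  let f : ((↥I ⊕ ↥J) ⊕ ↥S) → V :=
    Sum.elim (Sum.elim (fun x => x.1) (fun x => x.1)) (fun x => x.1)
  have hf_inj : Function.Injective f := by
    rintro ((⟨x, hx⟩ | ⟨x, hx⟩) | ⟨x, hx⟩) ((⟨y, hy⟩ | ⟨y, hy⟩) | ⟨y, hy⟩) h <;>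
      simp only [f, Sum.elim_inl, Sum.elim_inr] at h <;> subst h
    · rfl
    · exact absurd ⟨hx, hy⟩ (hIJ x)
    · exact absurd hy (hIS x hx)
    · exact absurd ⟨hy, hx⟩ (hIJ x)
    · rfl
    · exact absurd hy (hJS x hx)
    · exact absurd hx (hIS x hy)
    · exact absurd hx (hJS x hy)
    · rfl
  have hf_surj : Function.Surjective f := by
    intro v
    by_cases hvS : v ∈ S
    · exact ⟨Sum.inr ⟨v, hvS⟩, rfl⟩
    by_cases hvr : reach v
    · refine ⟨Sum.inl (Sum.inl ⟨v, ?_⟩), rfl⟩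
      rw [hI, Finset.mem_filter]
      exact ⟨Finset.mem_univ v, hvr⟩
    · refine ⟨Sum.inl (Sum.inr ⟨v, ?_⟩), rfl⟩
      rw [hJ, Finset.mem_filter]
      exact ⟨Finset.mem_univ v, hvS, hvr⟩
  let e : ((↥I ⊕ ↥J) ⊕ ↥S) ≃ V := Equiv.ofBijective f ⟨hf_inj, hf_surj⟩
  have hMpd : (K.submatrix e e).PosDef := posDef_submatrix_of_injective hKpd e.injective
  have h12 : ∀ (i : ↥I) (j : ↥J),
      (K.submatrix e e) (Sum.inl (Sum.inl i)) (Sum.inl (Sum.inr j)) = 0 :=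
    fun i j => (hK0' i.1 i.2 j.1 j.2).1
  have h21 : ∀ (i : ↥I) (j : ↥J),
      (K.submatrix e e) (Sum.inl (Sum.inr j)) (Sum.inl (Sum.inl i)) = 0 :=
    fun i j => (hK0' i.1 i.2 j.1 j.2).2
  have hinv : (K.submatrix e e)⁻¹ = Sg.submatrix e e := by
    rw [inv_submatrix_equiv, hSg]
  have hTps : ((K.submatrix e e)⁻¹).toBlocks₂₂ = psub Sg S := by
    rw [hinv]; rfl
  ext ⟨a, ha⟩ ⟨b, hb⟩
  have key := key_block (K.submatrix e e) hMpd h12 h21 ⟨a, hAI a ha⟩ ⟨b, hBJ b hb⟩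
  rw [hTps, hinv] at key
  have key' : Sg a b =
      ∑ t : ↥S, (∑ s : ↥S, Sg a s.1 * (psub Sg S)⁻¹ s t) * Sg t.1 b := key
  show Sg a b = _
  rw [key']
  simp only [Matrix.mul_apply]
  rfl
end
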